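/- Let ρ be a matrix on ℂ^{d_A} ⊗ ℂ^{d_B} (indexed by pairs (i,k),(j,l)) that is separable, i.e., ρ = ∑_m λ_m σ_m ⊗ τ_m with λ_m ≥ 0, ∑_m λ_m = 1, and σ_m, τ_m positive semidefinite matrices of unit trace on ℂ^{d_A} and ℂ^{d_B} respectively. Then the partial transpose ρ^{T_B}, defined entrywise by ρ^{T_B}((i,k),(j,l)) = ρ((i,l),(j,k)), is positive semidefinite. -/

import Mathlib

open Matrix Kronecker ComplexOrder

/-- A bipartite matrix on `ℂ^{dA} ⊗ ℂ^{dB}` is separable if it is a finite convex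
combination of Kronecker products of positive semidefinite unit-trace matrices. -/
def Separable {dA dB : ℕ} (ρ : Matrix (Fin dA × Fin dB) (Fin dA × Fin dB) ℂ) : Prop :=
  ∃ (n : ℕ) (lam : Fin n → ℝ) (σ : Fin n → Matrix (Fin dA) (Fin dA) ℂ)
    (τ : Fin n → Matrix (Fin dB) (Fin dB) ℂ),
    (∀ m, 0 ≤ lam m) ∧ (∑ m, lam m = 1) ∧
    (∀ m, (σ m).PosSemidef ∧ (σ m).trace = 1) ∧
    (∀ m, (τ m).PosSemidef ∧ (τ m).trace = 1) ∧
    ρ = ∑ m, (lam m : ℂ) • (σ m ⊗ₖ τ m)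

/-- The partial transpose with respect to the second subsystem:
`ρ^{T_B}((i,k),(j,l)) = ρ((i,l),(j,k))`. -/
def partialTransposeB {dA dB : ℕ}
    (ρ : Matrix (Fin dA × Fin dB) (Fin dA × Fin dB) ℂ) :
    Matrix (Fin dA × Fin dB) (Fin dA × Fin dB) ℂ :=
  Matrix.of fun p q => ρ (p.1, q.2) (q.1, p.2)

lemma kron_psd {dA dB : ℕ} {A : Matrix (Fin dA) (Fin dA) ℂ} {B : Matrix (Fin dB) (Fin dB) ℂ}
    (hA : A.PosSemidef) (hB : B.PosSemidef) : (A ⊗ₖ B).PosSemidef := by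
  obtain ⟨C, rfl⟩ : ∃ C : Matrix (Fin dA) (Fin dA) ℂ, A = Cᴴ * C := by
    open scoped MatrixOrder in exact CStarAlgebra.nonneg_iff_eq_star_mul_self.mp hA.nonneg
  obtain ⟨D, rfl⟩ : ∃ D : Matrix (Fin dB) (Fin dB) ℂ, B = Dᴴ * D := by
    open scoped MatrixOrder in exact CStarAlgebra.nonneg_iff_eq_star_mul_self.mp hB.nonneg
  rw [Matrix.mul_kronecker_mul]
  have : (Cᴴ ⊗ₖ Dᴴ) = (C ⊗ₖ D)ᴴ := by
    ext p q
    simp [Matrix.conjTranspose_apply, kroneckerMap_apply, _root_.map_mul]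
  rw [this]
  exact posSemidef_conjTranspose_mul_self _

lemma smul_psd {d : Type*} [Fintype d] {M : Matrix d d ℂ} (hM : M.PosSemidef) {r : ℝ} (hr : 0 ≤ r) :
    ((r : ℂ) • M).PosSemidef := by
  rw [posSemidef_iff_dotProduct_mulVec]
  constructor
  · unfold Matrix.IsHermitian
    rw [Matrix.conjTranspose_smul, hM.1]
    congr 1
    simp
  · intro x
    have := hM.dotProduct_mulVec_nonneg x
    rw [Matrix.smul_mulVec, dotProduct_smul]
    exact mul_nonneg (by exact_mod_cast Complex.zero_le_real.mpr hr) this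

lemma sum_psd {d : Type*} [Fintype d] {n : ℕ} {f : Fin n → Matrix d d ℂ}
    (h : ∀ m, (f m).PosSemidef) : (∑ m, f m).PosSemidef := by
  classical
  refine Finset.sum_induction f _ (fun a b ha hb => ha.add hb) Matrix.PosSemidef.zero
    (fun m _ => h m)

/-- **Peres–Horodecki (PPT) criterion, necessity**: every separable bipartite state
has a positive semidefinite partial transpose. -/
theorem separable_partialTranspose_posSemidef {dA dB : ℕ}
    (ρ : Matrix (Fin dA × Fin dB) (Fin dA × Fin dB) ℂ)
    (hsep : Separable ρ) : (partialTransposeB ρ).PosSemidef := by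
  obtain ⟨n, lam, σ, τ, hlam, _, hσ, hτ, rfl⟩ := hsep
  have key : partialTransposeB (∑ m, (lam m : ℂ) • (σ m ⊗ₖ τ m))
      = ∑ m, (lam m : ℂ) • (σ m ⊗ₖ (τ m)ᵀ) := by
    ext p q
    simp [partialTransposeB, Matrix.sum_apply, kroneckerMap_apply, Matrix.transpose_apply]
  rw [key]
  exact sum_psd fun m => smul_psd (kron_psd (hσ m).1 ((hτ m).1.transpose)) (hlam m)
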